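/- arXiv:1412.1993 — 5 statements merged into one kernel-verified Lean document; each statement's English description precedes it below -/
import Mathlib

section
/- Let X_1, X_2 be independent discrete random variables (possibly conditionally on a variable S), and let Y, Z be further discrete random variables. Then I(X_1; X_2 | S) = 0 implies that the difference h(A_1) + h(A_2) − h(A_1 ∪ A_2) − h(A_1 ∩ A_2), expressed via conditional mutual informations as I(X_1; X_2 | S, Y) + I(W_1; X_2 | X_1, S, Y) + I(W_2; W_1, X_1 | X_2, S, Y) − I(X_1; X_2 | S), is nonnegative for any discrete random variables W_1, W_2. -/
open scoped BigOperators

/-- Probability mass of `f ω = b` under the pmf `p` on the finite sample space `Ω`. -/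
noncomputable def pdist {Ω β : Type*} [Fintype Ω] [DecidableEq β]
    (p : Ω → ℝ) (f : Ω → β) (b : β) : ℝ :=
  ∑ ω, if f ω = b then p ω else 0

/-- Shannon entropy of the finite-valued random variable `f` under the pmf `p`. -/
noncomputable def entropy {Ω β : Type*} [Fintype Ω] [Fintype β] [DecidableEq β]
    (p : Ω → ℝ) (f : Ω → β) : ℝ :=
  -∑ b, pdist p f b * Real.log (pdist p f b)

/-- Conditional Shannon entropy `H(f | g)`. -/
noncomputable def condEntropy {Ω β γ : Type*} [Fintype Ω] [Fintype β] [DecidableEq β]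
    [Fintype γ] [DecidableEq γ] (p : Ω → ℝ) (f : Ω → β) (g : Ω → γ) : ℝ :=
  entropy p (fun ω => (f ω, g ω)) - entropy p g

/-- Conditional mutual information `I(f ; g | h)`. -/
noncomputable def condMI {Ω β γ δ : Type*} [Fintype Ω] [Fintype β] [DecidableEq β]
    [Fintype γ] [DecidableEq γ] [Fintype δ] [DecidableEq δ]
    (p : Ω → ℝ) (f : Ω → β) (g : Ω → γ) (h : Ω → δ) : ℝ :=
  condEntropy p f h + condEntropy p g h - condEntropy p (fun ω => (f ω, g ω)) h

/-- The tuple of random variables `{X i : i ∈ A}`, encoded as a masked vector. -/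
def masked {Ω 𝒳 : Type*} {n : ℕ} (X : Fin n → Ω → 𝒳) (A : Finset (Fin n)) (ω : Ω) :
    Fin n → Option 𝒳 :=
  fun i => if i ∈ A then some (X i ω) else none

section aux

variable {Ω β γ δ τ : Type*} [Fintype Ω]

lemma pdist_nonneg [DecidableEq τ] (p : Ω → ℝ) (hp0 : ∀ ω, 0 ≤ p ω)
    (F : Ω → τ) (t : τ) : 0 ≤ pdist p F t := by
  refine Finset.sum_nonneg fun ω _ => ?_
  split_ifs
  exacts [hp0 ω, le_rfl]

lemma le_pdist [DecidableEq τ] (p : Ω → ℝ) (hp0 : ∀ ω, 0 ≤ p ω)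
    (F : Ω → τ) (ω : Ω) : p ω ≤ pdist p F (F ω) := by
  have := Finset.single_le_sum (f := fun ω' => if F ω' = F ω then p ω' else 0)
    (fun ω' _ => by split_ifs; exacts [hp0 ω', le_rfl]) (Finset.mem_univ ω)
  simpa [pdist] using this

/-- Change of variables: sum over sample space vs sum over values. -/
lemma sum_mul_comp [DecidableEq τ] [Fintype τ] (p : Ω → ℝ) (F : Ω → τ) (φ : τ → ℝ) :
    ∑ ω, p ω * φ (F ω) = ∑ t, pdist p F t * φ t := by
  unfold pdist
  simp_rw [Finset.sum_mul, ite_mul, zero_mul]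
  rw [Finset.sum_comm]
  simp

lemma entropy_eq [DecidableEq τ] [Fintype τ] (p : Ω → ℝ) (F : Ω → τ) :
    entropy p F = -∑ ω, p ω * Real.log (pdist p F (F ω)) := by
  rw [entropy, ← sum_mul_comp p F (fun t => Real.log (pdist p F t))]

/-- Marginalization over the first coordinate. -/
lemma pdist_marginal [DecidableEq β] [Fintype β] [DecidableEq δ]
    (p : Ω → ℝ) (F : Ω → β) (G : Ω → δ) (d : δ) :
    ∑ b, pdist p (fun ω => (F ω, G ω)) (b, d) = pdist p G d := by
  unfold pdist
  rw [Finset.sum_comm]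
  congr 1
  ext ω
  simp [Prod.ext_iff]
  by_cases h : G ω = d <;> simp [h]

lemma sum_pdist [DecidableEq τ] [Fintype τ] (p : Ω → ℝ) (F : Ω → τ) :
    ∑ t, pdist p F t = ∑ ω, p ω := by
  unfold pdist
  rw [Finset.sum_comm]
  simp

lemma condMI_nonneg [DecidableEq β] [Fintype β] [DecidableEq γ] [Fintype γ]
    [DecidableEq δ] [Fintype δ]
    (p : Ω → ℝ) (hp0 : ∀ ω, 0 ≤ p ω) (f : Ω → β) (g : Ω → γ) (h : Ω → δ) :
    0 ≤ condMI p f g h := by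
  classical
  set q1 : β × δ → ℝ := pdist p (fun ω => (f ω, h ω)) with hq1
  set q2 : γ × δ → ℝ := pdist p (fun ω => (g ω, h ω)) with hq2
  set qd : δ → ℝ := pdist p h with hqd
  set F : Ω → (β × γ) × δ := fun ω => ((f ω, g ω), h ω) with hF
  set q : (β × γ) × δ → ℝ := pdist p F with hq
  set R : (β × γ) × δ → ℝ := fun t => q1 (t.1.1, t.2) * q2 (t.1.2, t.2) / qd t.2 with hR
  have hq1n : ∀ t, 0 ≤ q1 t := pdist_nonneg p hp0 _
  have hq2n : ∀ t, 0 ≤ q2 t := pdist_nonneg p hp0 _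
  have hqdn : ∀ t, 0 ≤ qd t := pdist_nonneg p hp0 _
  have hqn : ∀ t, 0 ≤ q t := pdist_nonneg p hp0 _
  have hRn : ∀ t, 0 ≤ R t := fun t => by
    exact div_nonneg (mul_nonneg (hq1n _) (hq2n _)) (hqdn _)
  have hcond : condMI p f g h
      = ∑ ω, p ω * (Real.log (q (F ω)) + Real.log (qd (h ω))
          - Real.log (q1 (f ω, h ω)) - Real.log (q2 (g ω, h ω))) := by
    simp only [condMI, condEntropy, entropy_eq, hq, hq1, hq2, hqd, hF,
      mul_add, mul_sub]
    rw [Finset.sum_sub_distrib, Finset.sum_sub_distrib, Finset.sum_add_distrib]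
    ring
  rw [hcond]
  have step1 : ∑ ω, (p ω - p ω * (R (F ω) / q (F ω)))
      ≤ ∑ ω, p ω * (Real.log (q (F ω)) + Real.log (qd (h ω))
          - Real.log (q1 (f ω, h ω)) - Real.log (q2 (g ω, h ω))) := by
    refine Finset.sum_le_sum fun ω _ => ?_
    rcases eq_or_lt_of_le (hp0 ω) with hpe | hpp
    · simp [← hpe]
    · have hqp : 0 < q (F ω) := lt_of_lt_of_le hpp (le_pdist p hp0 F ω)
      have hq1p : 0 < q1 (f ω, h ω) :=
        lt_of_lt_of_le hpp (le_pdist p hp0 (fun ω => (f ω, h ω)) ω)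
      have hq2p : 0 < q2 (g ω, h ω) :=
        lt_of_lt_of_le hpp (le_pdist p hp0 (fun ω => (g ω, h ω)) ω)
      have hqdp : 0 < qd (h ω) := lt_of_lt_of_le hpp (le_pdist p hp0 h ω)
      have hx : (0:ℝ) < q (F ω) * qd (h ω) / (q1 (f ω, h ω) * q2 (g ω, h ω)) := by
        positivity
      have hlog := Real.one_sub_inv_le_log_of_pos hx
      rw [Real.log_div (by positivity) (by positivity),
        Real.log_mul (ne_of_gt hqp) (ne_of_gt hqdp),
        Real.log_mul (ne_of_gt hq1p) (ne_of_gt hq2p)] at hlog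
      have hinv : (q (F ω) * qd (h ω) / (q1 (f ω, h ω) * q2 (g ω, h ω)))⁻¹
          = R (F ω) / q (F ω) := by
        rw [hR]
        simp only [hF]
        field_simp
      rw [hinv] at hlog
      calc p ω - p ω * (R (F ω) / q (F ω))
          = p ω * (1 - R (F ω) / q (F ω)) := by ring
        _ ≤ p ω * (Real.log (q (F ω)) + Real.log (qd (h ω))
              - Real.log (q1 (f ω, h ω)) - Real.log (q2 (g ω, h ω))) := by
            apply mul_le_mul_of_nonneg_left _ (le_of_lt hpp)
            linarith
  have step2 : ∑ ω, (p ω - p ω * (R (F ω) / q (F ω)))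
      = ∑ ω, p ω - ∑ t, q t * (R t / q t) := by
    rw [Finset.sum_sub_distrib, sum_mul_comp p F (fun t => R t / q t)]
  have step3 : ∑ t, q t * (R t / q t) ≤ ∑ t, R t := by
    refine Finset.sum_le_sum fun t _ => ?_
    rcases eq_or_ne (q t) 0 with h0 | h0
    · simp [h0]; exact hRn t
    · rw [mul_div_cancel₀ _ h0]
  have step4 : ∑ t, R t ≤ ∑ ω, p ω := by
    have hsum : ∑ t : (β × γ) × δ, R t
        = ∑ d, (∑ b, q1 (b, d)) * (∑ c, q2 (c, d)) / qd d := by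
      rw [Fintype.sum_prod_type, Finset.sum_comm]
      congr 1
      ext d
      rw [Fintype.sum_prod_type]
      rw [Finset.sum_mul, Finset.sum_div]
      congr 1
      ext b
      rw [Finset.mul_sum, Finset.sum_div]
    rw [hsum]
    calc ∑ d, (∑ b, q1 (b, d)) * (∑ c, q2 (c, d)) / qd d
        = ∑ d, qd d * qd d / qd d := by
          congr 1; ext d
          rw [hq1, hq2, pdist_marginal, pdist_marginal]
      _ ≤ ∑ d, qd d := by
          refine Finset.sum_le_sum fun d _ => ?_
          rcases eq_or_ne (qd d) 0 with h0 | h0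
          · simp [h0]
          · rw [mul_div_assoc, div_self h0, mul_one]
      _ = ∑ ω, p ω := sum_pdist p h
  linarith

end aux

/-- The key inequality used to prove submodularity of the cut-set function under
independent inputs: if `I(X₁; X₂ | S) = 0` then the combination of conditional
mutual informations expressing `h(A₁)+h(A₂)−h(A₁∪A₂)−h(A₁∩A₂)` is nonnegative. -/
theorem key_inequality {Ω 𝒳₁ 𝒳₂ 𝒮 𝒴 𝒲₁ 𝒲₂ : Type*} [Fintype Ω]
    [Fintype 𝒳₁] [DecidableEq 𝒳₁] [Fintype 𝒳₂] [DecidableEq 𝒳₂]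
    [Fintype 𝒮] [DecidableEq 𝒮] [Fintype 𝒴] [DecidableEq 𝒴]
    [Fintype 𝒲₁] [DecidableEq 𝒲₁] [Fintype 𝒲₂] [DecidableEq 𝒲₂]
    (p : Ω → ℝ) (hp0 : ∀ ω, 0 ≤ p ω) (hp1 : ∑ ω, p ω = 1)
    (X₁ : Ω → 𝒳₁) (X₂ : Ω → 𝒳₂) (S : Ω → 𝒮) (Y : Ω → 𝒴)
    (W₁ : Ω → 𝒲₁) (W₂ : Ω → 𝒲₂)
    (hindep : condMI p X₁ X₂ S = 0) :
    0 ≤ condMI p X₁ X₂ (fun ω => (S ω, Y ω))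
      + condMI p W₁ X₂ (fun ω => (X₁ ω, S ω, Y ω))
      + condMI p W₂ (fun ω => (W₁ ω, X₁ ω)) (fun ω => (X₂ ω, S ω, Y ω))
      - condMI p X₁ X₂ S := by
  rw [hindep, sub_zero]
  exact add_nonneg (add_nonneg (condMI_nonneg p hp0 _ _ _) (condMI_nonneg p hp0 _ _ _))
    (condMI_nonneg p hp0 _ _ _)
end

section
/- Let f be a submodular set function on subsets of [1:N] with f(∅) = 0, and let f̂ be its Lovász extension defined by f̂(w) = max{wᵀx : x ∈ P(f)} where P(f) = {x ∈ ℝᴺ : Σ_{i∈A} x_i ≤ f(A) for all A ⊆ [1:N]}. Then for any weight vector w ∈ ℝᴺ with w_{π_1} ≥ … ≥ w_{π_N} for a permutation π, the vector x with components x_{π_i} = f({π_1,…,π_i}) − f({π_1,…,π_{i−1}}) lies in P(f). -/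
/-- A set function on subsets of `Fin N` is submodular if
`f A + f B ≥ f (A ∪ B) + f (A ∩ B)` for all `A, B`. -/
def Submodular {N : ℕ} (f : Finset (Fin N) → ℝ) : Prop :=
  ∀ A B : Finset (Fin N), f (A ∪ B) + f (A ∩ B) ≤ f A + f B

/-- The submodular polyhedron `P(f) = {x : ∑_{i∈A} x i ≤ f A for all A}`. -/
def submodularPolyhedron {N : ℕ} (f : Finset (Fin N) → ℝ) : Set (Fin N → ℝ) :=
  {x | ∀ A : Finset (Fin N), ∑ i ∈ A, x i ≤ f A}

/-- The Lovász extension `f̂(w) = sup {wᵀx : x ∈ P(f)}`. -/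
noncomputable def lovasz {N : ℕ} (f : Finset (Fin N) → ℝ) (w : Fin N → ℝ) : ℝ :=
  sSup ((fun x => ∑ i, w i * x i) '' submodularPolyhedron f)

/-- The prefix set `{π_1, …, π_k}` of a permutation `π` of `Fin N`. -/
def prefixSet {N : ℕ} (π : Equiv.Perm (Fin N)) (k : ℕ) : Finset (Fin N) :=
  Finset.univ.filter (fun j => (π.symm j : ℕ) < k)

/-- Feasibility of the greedy vector: for a submodular `f` with `f ∅ = 0` and a weight
vector `w` ordered decreasingly along a permutation `π`, the greedy vector
`x (π i) = f({π_1,…,π_i}) − f({π_1,…,π_{i−1}})` lies in the submodular polyhedron. -/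
theorem greedy_feasible {N : ℕ} (f : Finset (Fin N) → ℝ)
    (hsub : Submodular f) (h0 : f ∅ = 0)
    (π : Equiv.Perm (Fin N)) (w : Fin N → ℝ)
    (hw : ∀ i j : Fin N, i ≤ j → w (π j) ≤ w (π i))
    (x : Fin N → ℝ)
    (hx : ∀ i : Fin N, x (π i) = f (prefixSet π ((i : ℕ) + 1)) - f (prefixSet π (i : ℕ))) :
    x ∈ submodularPolyhedron f := by
  intro A
  induction A using Finset.strongInductionOn with
  | _ A ih =>
    rcases A.eq_empty_or_nonempty with rfl | hA
    · simp [h0]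
    · obtain ⟨i, hi, hmax⟩ := A.exists_max_image (fun j => (π.symm j : ℕ)) hA
      set k : Fin N := π.symm i with hk
      have hxi : x i = f (prefixSet π ((k : ℕ) + 1)) - f (prefixSet π (k : ℕ)) := by
        have := hx k
        rwa [hk, Equiv.apply_symm_apply] at this
      have hAsub : A ⊆ prefixSet π ((k : ℕ) + 1) := by
        intro j hj
        simp only [prefixSet, Finset.mem_filter, Finset.mem_univ, true_and]
        exact Nat.lt_succ_of_le (hmax j hj)
      have hiknot : i ∉ prefixSet π (k : ℕ) := by
        simp [prefixSet, hk]
      have hunion : A ∪ prefixSet π (k : ℕ) = prefixSet π ((k : ℕ) + 1) := by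
        apply Finset.Subset.antisymm
        · apply Finset.union_subset hAsub
          intro j hj
          simp only [prefixSet, Finset.mem_filter, Finset.mem_univ, true_and] at hj ⊢
          omega
        · intro j hj
          simp only [prefixSet, Finset.mem_filter, Finset.mem_univ, true_and,
            Finset.mem_union] at hj ⊢
          rcases Nat.lt_succ_iff_lt_or_eq.mp hj with h | h
          · exact Or.inr h
          · left
            have : j = i := by
              have : π.symm j = π.symm i := Fin.ext (by simp [← hk, h])
              exact π.symm.injective this
            rwa [this]
      have hinter : A ∩ prefixSet π (k : ℕ) = A.erase i := by
        ext j
        simp only [Finset.mem_inter, Finset.mem_erase, prefixSet, Finset.mem_filter,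
          Finset.mem_univ, true_and]
        constructor
        · rintro ⟨hja, hjk⟩
          refine ⟨fun hji => ?_, hja⟩
          subst hji; simp [← hk] at hjk
        · rintro ⟨hji, hja⟩
          refine ⟨hja, ?_⟩
          have := hAsub hja
          simp only [prefixSet, Finset.mem_filter, Finset.mem_univ, true_and] at this
          rcases Nat.lt_succ_iff_lt_or_eq.mp this with h | h
          · exact h
          · exfalso; apply hji
            exact π.symm.injective (Fin.ext (by simp [← hk, h]))
      have hsm := hsub A (prefixSet π (k : ℕ))
      rw [hunion, hinter] at hsm
      have hih := ih (A.erase i) (Finset.erase_ssubset hi)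
      have hsum : ∑ j ∈ A, x j = x i + ∑ j ∈ A.erase i, x j :=
        (Finset.add_sum_erase A x hi).symm
      rw [hsum, hxi]
      linarith
end

section
/- Let f be a submodular set function on subsets of [1:N] with f(∅) = 0, with Lovász extension f̂. Then the minimum of f over all subsets equals the minimum of f̂ over the cube [0,1]^N, and also equals the minimum of f̂ over the vertices {0,1}^N of the cube: min_{A ⊆ [1:N]} f(A) = min_{w ∈ [0,1]^N} f̂(w) = min_{w ∈ {0,1}^N} f̂(w). -/
namespace LovaszAux

variable {N : ℕ}

/-- The first `k` elements in the order given by `σ`. -/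
def chain (σ : Equiv.Perm (Fin N)) (k : ℕ) : Finset (Fin N) :=
  Finset.univ.filter fun i => ((σ.symm i : Fin N) : ℕ) < k

lemma mem_chain {σ : Equiv.Perm (Fin N)} {k : ℕ} {i : Fin N} :
    i ∈ chain σ k ↔ ((σ.symm i : Fin N) : ℕ) < k := by simp [chain]

lemma chain_zero (σ : Equiv.Perm (Fin N)) : chain σ 0 = ∅ := by
  ext i; simp [mem_chain]

lemma chain_of_le (σ : Equiv.Perm (Fin N)) {k : ℕ} (h : N ≤ k) :
    chain σ k = Finset.univ := by
  ext i
  simp only [mem_chain, Finset.mem_univ, iff_true]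
  exact lt_of_lt_of_le (σ.symm i).isLt h

lemma chain_succ (σ : Equiv.Perm (Fin N)) {k : ℕ} (hk : k < N) :
    chain σ (k + 1) = insert (σ ⟨k, hk⟩) (chain σ k) := by
  ext i
  simp only [mem_chain, Finset.mem_insert]
  constructor
  · intro h
    rcases Nat.lt_succ_iff_lt_or_eq.mp h with h' | h'
    · exact Or.inr h'
    · left
      have hh : σ.symm i = ⟨k, hk⟩ := Fin.ext h'
      rw [← hh, Equiv.apply_symm_apply]
  · rintro (h | h)
    · subst h; simp
    · exact Nat.lt_succ_of_lt h

lemma not_mem_chain (σ : Equiv.Perm (Fin N)) {k : ℕ} (hk : k < N) :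
    σ ⟨k, hk⟩ ∉ chain σ k := by simp [mem_chain]

/-- The greedy vector associated to the ordering `σ`. -/
noncomputable def greedy (f : Finset (Fin N) → ℝ) (σ : Equiv.Perm (Fin N)) (i : Fin N) : ℝ :=
  f (chain σ ((σ.symm i : Fin N) + 1)) - f (chain σ (σ.symm i : Fin N))

lemma greedy_apply (f : Finset (Fin N) → ℝ) (σ : Equiv.Perm (Fin N)) (j : Fin N) :
    greedy f σ (σ j) = f (chain σ ((j : ℕ) + 1)) - f (chain σ (j : ℕ)) := by
  simp [greedy]

lemma chain_stable (σ : Equiv.Perm (Fin N)) {k : ℕ} (hk : ¬ k < N) :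
    chain σ (k + 1) = chain σ k := by
  rw [chain_of_le σ (by omega), chain_of_le σ (by omega)]

lemma sum_chain (f : Finset (Fin N) → ℝ) (h0 : f ∅ = 0) (σ : Equiv.Perm (Fin N)) :
    ∀ k, ∑ i ∈ chain σ k, greedy f σ i = f (chain σ k)
  | 0 => by simp [chain_zero, h0]
  | (k + 1) => by
    by_cases hk : k < N
    · rw [chain_succ σ hk, Finset.sum_insert (not_mem_chain σ hk),
        sum_chain f h0 σ k]
      have hg := greedy_apply f σ ⟨k, hk⟩
      simp only at hg
      rw [chain_succ σ hk] at hg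
      rw [hg]
      ring
    · rw [chain_stable σ hk]
      exact sum_chain f h0 σ k

lemma feasible (f : Finset (Fin N) → ℝ) (hsub : Submodular f) (h0 : f ∅ = 0)
    (σ : Equiv.Perm (Fin N)) : greedy f σ ∈ submodularPolyhedron f := by
  have key : ∀ k (B : Finset (Fin N)),
      ∑ i ∈ B ∩ chain σ k, greedy f σ i ≤ f (B ∩ chain σ k) := by
    intro k
    induction k with
    | zero => intro B; simp [chain_zero, h0]
    | succ k ih =>
      intro B
      by_cases hk : k < N
      · rw [chain_succ σ hk]
        set e := σ ⟨k, hk⟩ with he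
        have hni : e ∉ chain σ k := not_mem_chain σ hk
        by_cases hB : e ∈ B
        · have h1 : B ∩ insert e (chain σ k) = insert e (B ∩ chain σ k) := by
            ext x
            simp only [Finset.mem_inter, Finset.mem_insert]
            constructor
            · rintro ⟨h2, h | h⟩
              · exact Or.inl h
              · exact Or.inr ⟨h2, h⟩
            · rintro (h | h)
              · exact ⟨by rw [h]; exact hB, Or.inl h⟩
              · exact ⟨h.1, Or.inr h.2⟩
          rw [h1, Finset.sum_insert (by
            simp only [Finset.mem_inter, not_and]
            exact fun _ => hni)]
          have hsm := hsub (insert e (B ∩ chain σ k)) (chain σ k)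
          have hu : insert e (B ∩ chain σ k) ∪ chain σ k = insert e (chain σ k) := by
            ext x; simp only [Finset.mem_union, Finset.mem_insert, Finset.mem_inter]; tauto
          have hi : insert e (B ∩ chain σ k) ∩ chain σ k = B ∩ chain σ k := by
            ext x
            simp only [Finset.mem_inter, Finset.mem_insert]
            constructor
            · rintro ⟨h | h, h2⟩
              · exact absurd (h ▸ h2) hni
              · exact ⟨h.1, h2⟩
            · tauto
          rw [hu, hi] at hsm
          have hg := greedy_apply f σ ⟨k, hk⟩
          rw [chain_succ σ hk] at hg
          have hih := ih B
          rw [← he] at hg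
          linarith
        · have h1 : B ∩ insert e (chain σ k) = B ∩ chain σ k := by
            ext x
            simp only [Finset.mem_inter, Finset.mem_insert]
            constructor
            · rintro ⟨h2, h | h⟩
              · exact absurd (h ▸ h2) hB
              · exact ⟨h2, h⟩
            · tauto
          rw [h1]; exact ih B
      · rw [chain_stable σ hk]; exact ih B
  intro B
  have h := key N B
  rwa [chain_of_le σ le_rfl, Finset.inter_univ] at h

lemma bddAbove_image (f : Finset (Fin N) → ℝ) (w : Fin N → ℝ) (hw0 : ∀ i, 0 ≤ w i) :
    BddAbove ((fun x => ∑ i, w i * x i) '' submodularPolyhedron f) := by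
  refine ⟨∑ i, w i * f {i}, ?_⟩
  rintro y ⟨z, hz, rfl⟩
  apply Finset.sum_le_sum
  intro i _
  have h := hz {i}
  rw [Finset.sum_singleton] at h
  exact mul_le_mul_of_nonneg_left h (hw0 i)

lemma abel_bound (m : ℝ) (hm0 : m ≤ 0) (W G : ℕ → ℝ) (n : ℕ)
    (hW : ∀ k l, k ≤ l → W l ≤ W k) (hW0 : ∀ k, 0 ≤ W k) (hW1 : W 0 ≤ 1)
    (hWN : W n = 0) (hG0 : G 0 = 0) (hGm : ∀ k, m ≤ G k) :
    m ≤ ∑ k ∈ Finset.range n, W k * (G (k + 1) - G k) := by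
  have key : ∀ j, W j * G j + (W 0 - W j) * m ≤
      ∑ k ∈ Finset.range j, W k * (G (k + 1) - G k) := by
    intro j
    induction j with
    | zero => simp [hG0]
    | succ j ih =>
      rw [Finset.sum_range_succ]
      have h1 : 0 ≤ (W j - W (j + 1)) * (G (j + 1) - m) :=
        mul_nonneg (by linarith [hW j (j + 1) (Nat.le_succ j)]) (by linarith [hGm (j + 1)])
      nlinarith [ih]
  have h := key n
  rw [hWN] at h
  have h2 : 0 ≤ (1 - W 0) * (-m) := mul_nonneg (by linarith) (by linarith)
  nlinarith [h]

lemma lovasz_ge (f : Finset (Fin N) → ℝ) (hsub : Submodular f) (h0 : f ∅ = 0)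
    (w : Fin N → ℝ) (hw0 : ∀ i, 0 ≤ w i) (hw1 : ∀ i, w i ≤ 1) :
    sInf (Set.range f) ≤ lovasz f w := by
  set m := sInf (Set.range f) with hm
  have hbdd : BddBelow (Set.range f) := (Set.finite_range f).bddBelow
  have hm_le : ∀ A, m ≤ f A := fun A => csInf_le hbdd ⟨A, rfl⟩
  have hm0 : m ≤ 0 := h0 ▸ hm_le ∅
  set σ := Tuple.sort (fun i => -w i) with hσ
  have hmono : Monotone ((fun i => -w i) ∘ σ) := Tuple.monotone_sort _
  set x := greedy f σ with hx
  set W : ℕ → ℝ := fun k => if h : k < N then w (σ ⟨k, h⟩) else 0 with hWdef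
  set G : ℕ → ℝ := fun k => f (chain σ k) with hGdef
  have hsum : ∑ i, w i * x i = ∑ k ∈ Finset.range N, W k * (G (k + 1) - G k) := by
    rw [← Equiv.sum_comp σ (fun i => w i * x i),
      ← Fin.sum_univ_eq_sum_range (fun k => W k * (G (k + 1) - G k)) N]
    apply Finset.sum_congr rfl
    intro j _
    have hj : (j : ℕ) < N := j.isLt
    simp only [hWdef, hGdef, dif_pos hj, Fin.eta]
    rw [hx, greedy_apply f σ j]
  have hxmem : x ∈ submodularPolyhedron f := feasible f hsub h0 σ
  have hle : ∑ i, w i * x i ≤ lovasz f w :=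
    le_csSup (bddAbove_image f w hw0) ⟨x, hxmem, rfl⟩
  have habel : m ≤ ∑ k ∈ Finset.range N, W k * (G (k + 1) - G k) := by
    apply abel_bound m hm0
    · intro k l hkl
      by_cases hl : l < N
      · have hk : k < N := lt_of_le_of_lt hkl hl
        simp only [hWdef, dif_pos hl, dif_pos hk]
        have := hmono (show (⟨k, hk⟩ : Fin N) ≤ ⟨l, hl⟩ from hkl)
        simp only [Function.comp_apply, neg_le_neg_iff] at this
        linarith
      · simp only [hWdef, dif_neg hl]
        by_cases hk : k < N
        · simp only [dif_pos hk]; exact hw0 _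
        · simp only [dif_neg hk]; exact le_refl 0
    · intro k
      by_cases hk : k < N
      · simp only [hWdef, dif_pos hk]; exact hw0 _
      · simp only [hWdef, dif_neg hk]; exact le_refl 0
    · by_cases hN : 0 < N
      · simp only [hWdef, dif_pos hN]; exact hw1 _
      · simp only [hWdef, dif_neg hN]; norm_num
    · simp only [hWdef, dif_neg (lt_irrefl N)]
    · simp only [hGdef, chain_zero, h0]
    · intro k; exact hm_le _
  linarith

/-- Indicator vector of a finset. -/
def ind (A : Finset (Fin N)) : Fin N → ℝ := fun i => if i ∈ A then 1 else 0

lemma ind_nonneg (A : Finset (Fin N)) (i : Fin N) : 0 ≤ ind A i := by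
  unfold ind; split <;> norm_num

lemma ind_le_one (A : Finset (Fin N)) (i : Fin N) : ind A i ≤ 1 := by
  unfold ind; split <;> norm_num

lemma sum_ind_mul (A : Finset (Fin N)) (x : Fin N → ℝ) :
    ∑ i, ind A i * x i = ∑ i ∈ A, x i := by
  simp only [ind, ite_mul, one_mul, zero_mul]
  rw [Finset.sum_ite_mem, Finset.univ_inter]

lemma exists_perm (A : Finset (Fin N)) :
    ∃ σ : Equiv.Perm (Fin N), chain σ A.card = A := by
  have hA : A.card ≤ N := by simpa using A.card_le_univ
  have hsum : A.card + (N - A.card) = N := by omega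
  have hc : Aᶜ.card = N - A.card := by
    rw [Finset.card_compl]; simp
  let e₃ : Fin A.card ≃ {x : Fin N // x ∈ A} := (A.orderIsoOfFin rfl).toEquiv
  let e₄ : Fin (N - A.card) ≃ {x : Fin N // ¬ x ∈ A} :=
    (Aᶜ.orderIsoOfFin hc).toEquiv.trans (Equiv.subtypeEquivRight (fun x => Finset.mem_compl))
  let σ : Equiv.Perm (Fin N) :=
    ((finCongr hsum.symm).trans finSumFinEquiv.symm).trans
      ((Equiv.sumCongr e₃ e₄).trans (Equiv.sumCompl (· ∈ A)))
  refine ⟨σ, ?_⟩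
  have key : ∀ j : Fin N, σ j ∈ A ↔ (j : ℕ) < A.card := by
    intro j
    have hσj : σ j = (Equiv.sumCompl (· ∈ A))
        ((Equiv.sumCongr e₃ e₄) (finSumFinEquiv.symm (finCongr hsum.symm j))) := rfl
    rcases h : finSumFinEquiv.symm (finCongr hsum.symm j) with k | k
    · have h2 : finCongr hsum.symm j = finSumFinEquiv (Sum.inl k) := by
        rw [← h, Equiv.apply_symm_apply]
      have hj : (j : ℕ) = (k : ℕ) := by
        have := congrArg Fin.val h2
        simpa using this
      rw [hσj, h]
      simp only [Equiv.sumCongr_apply, Sum.map_inl, Equiv.sumCompl_apply_inl]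
      exact iff_of_true (e₃ k).2 (hj ▸ k.isLt)
    · have h2 : finCongr hsum.symm j = finSumFinEquiv (Sum.inr k) := by
        rw [← h, Equiv.apply_symm_apply]
      have hj : (j : ℕ) = A.card + (k : ℕ) := by
        have := congrArg Fin.val h2
        simpa using this
      rw [hσj, h]
      simp only [Equiv.sumCongr_apply, Sum.map_inr, Equiv.sumCompl_apply_inr]
      exact iff_of_false (e₄ k).2 (by omega)
  ext i
  rw [mem_chain, ← key (σ.symm i), Equiv.apply_symm_apply]

lemma lovasz_ind (f : Finset (Fin N) → ℝ) (hsub : Submodular f) (h0 : f ∅ = 0)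
    (A : Finset (Fin N)) : lovasz f (ind A) = f A := by
  obtain ⟨σ, hσ⟩ := exists_perm A
  have hxmem : greedy f σ ∈ submodularPolyhedron f := feasible f hsub h0 σ
  have hne : ((fun x => ∑ i, ind A i * x i) '' submodularPolyhedron f).Nonempty :=
    ⟨_, greedy f σ, hxmem, rfl⟩
  apply le_antisymm
  · apply csSup_le hne
    rintro y ⟨z, hz, rfl⟩
    show ∑ i, ind A i * z i ≤ f A
    rw [sum_ind_mul]
    exact hz A
  · have hval : ∑ i, ind A i * greedy f σ i = f A := by
      rw [sum_ind_mul, ← hσ, sum_chain f h0 σ, hσ]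
    calc f A = ∑ i, ind A i * greedy f σ i := hval.symm
      _ ≤ _ := le_csSup (bddAbove_image f (ind A) (ind_nonneg A)) ⟨greedy f σ, hxmem, rfl⟩

end LovaszAux

open LovaszAux in
/-- The minimum of a submodular function equals the minimum of its Lovász extension over
the cube `[0,1]^N`, and also over the vertices `{0,1}^N` of the cube. -/
theorem min_submodular_eq_min_lovasz {N : ℕ} (f : Finset (Fin N) → ℝ)
    (hsub : Submodular f) (h0 : f ∅ = 0) :
    sInf (Set.range f) = sInf (lovasz f '' Set.Icc (0 : Fin N → ℝ) 1) ∧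
    sInf (Set.range f) = sInf (lovasz f '' {w : Fin N → ℝ | ∀ i, w i = 0 ∨ w i = 1}) := by
  set m := sInf (Set.range f) with hm
  have hbdd : BddBelow (Set.range f) := (Set.finite_range f).bddBelow
  have hm_le : ∀ A, m ≤ f A := fun A => csInf_le hbdd ⟨A, rfl⟩
  obtain ⟨A₀, hA₀⟩ : ∃ A, f A = m :=
    (Set.range_nonempty f).csInf_mem (Set.finite_range f)
  have hind_mem : ∀ A : Finset (Fin N), ind A ∈ Set.Icc (0 : Fin N → ℝ) 1 := by
    intro A
    constructor
    · intro i; exact ind_nonneg A i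
    · intro i; exact ind_le_one A i
  have hcube_ge : ∀ y ∈ lovasz f '' Set.Icc (0 : Fin N → ℝ) 1, m ≤ y := by
    rintro y ⟨w, hw, rfl⟩
    exact lovasz_ge f hsub h0 w (fun i => hw.1 i) (fun i => hw.2 i)
  have hvert : lovasz f '' {w : Fin N → ℝ | ∀ i, w i = 0 ∨ w i = 1} = Set.range f := by
    ext y
    constructor
    · rintro ⟨w, hw, rfl⟩
      have hw' : w = ind (Finset.univ.filter (fun i => w i = 1)) := by
        funext i
        rcases hw i with h | h
        · simp [ind, h]
        · simp [ind, h]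
      rw [hw', lovasz_ind f hsub h0]
      exact ⟨_, rfl⟩
    · rintro ⟨A, rfl⟩
      refine ⟨ind A, fun i => ?_, lovasz_ind f hsub h0 A⟩
      unfold ind; split
      · exact Or.inr rfl
      · exact Or.inl rfl
  constructor
  · apply le_antisymm
    · exact le_csInf ⟨_, ⟨ind A₀, hind_mem A₀, rfl⟩⟩ hcube_ge
    · apply csInf_le ⟨m, hcube_ge⟩
      exact ⟨ind A₀, hind_mem A₀, by rw [lovasz_ind f hsub h0, hA₀]⟩
  · rw [hvert]
end

section
/- For the bilinear max-min problem max_λ min_{A ⊆ [1:N]} Σ_{s} λ_s f_s(A), where λ ranges over the probability simplex on 2^N states and f_s(A) ≥ 0 for all s and A, the optimal value is unchanged if the maximization is restricted to probability vectors λ with at most N+1 nonzero entries. -/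
open Finset Filter Topology

namespace SimpleSchedAux

abbrev EE (N : ℕ) := (Fin N → Bool) → ℝ

noncomputable def gfun {N : ℕ} (f : (Fin N → Bool) → Finset (Fin N) → ℝ)
    (lam : EE N) (A : Finset (Fin N)) : ℝ := ∑ s, lam s * f s A

noncomputable def vfun {N : ℕ} (f : (Fin N → Bool) → Finset (Fin N) → ℝ)
    (lam : EE N) : ℝ := ⨅ A : Finset (Fin N), gfun f lam A

variable {N : ℕ} {f : (Fin N → Bool) → Finset (Fin N) → ℝ} {lam : EE N}

lemma vfun_le (A : Finset (Fin N)) : vfun f lam ≤ gfun f lam A :=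
  ciInf_le (Set.Finite.bddBelow (Set.finite_range _)) A

lemma le_vfun {b : ℝ} (h : ∀ A, b ≤ gfun f lam A) : b ≤ vfun f lam := le_ciInf h

lemma vfun_attained : ∃ A, vfun f lam = gfun f lam A := by
  obtain ⟨A, -, hA⟩ := Finset.exists_min_image Finset.univ (gfun f lam) ⟨∅, Finset.mem_univ _⟩
  exact ⟨A, le_antisymm (vfun_le A) (le_vfun fun B => hA B (Finset.mem_univ _))⟩

lemma gfun_continuous (A : Finset (Fin N)) : Continuous fun lam : EE N => gfun f lam A :=
  continuous_finset_sum _ fun s _ => (continuous_apply s).mul continuous_const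

lemma continuous_finset_inf' {α X : Type*} [TopologicalSpace X] :
    ∀ (s : Finset α) (hs : s.Nonempty) (F : α → X → ℝ), (∀ a, Continuous (F a)) →
    Continuous fun x => s.inf' hs (fun a => F a x) := by
  intro s hs
  induction hs using Finset.Nonempty.cons_induction with
  | singleton a => intro F hF; simpa using hF a
  | cons a s ha hs ih =>
    intro F hF
    have heq : (fun x => (Finset.cons a s ha).inf' (Finset.cons_nonempty ha) (fun b => F b x))
        = fun x => min (F a x) (s.inf' hs fun b => F b x) := by
      funext x
      rw [Finset.inf'_cons]
    rw [heq]
    exact (hF a).min (ih F hF)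

lemma vfun_continuous : Continuous (vfun f (N := N)) := by
  have hne : (Finset.univ : Finset (Finset (Fin N))).Nonempty := ⟨∅, Finset.mem_univ _⟩
  have heq : vfun f (N := N) = fun lam =>
      Finset.univ.inf' hne (fun A => gfun f lam A) := by
    funext lam
    rw [Finset.inf'_eq_csInf_image, Finset.coe_univ, Set.image_univ, vfun, ← sInf_range]
  rw [heq]
  exact continuous_finset_inf' _ hne _ fun A => gfun_continuous A

noncomputable def pairL {N : ℕ} (x : EE N) : EE N →ₗ[ℝ] ℝ where
  toFun d := ∑ s, x s * d s
  map_add' a b := by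
    simp [mul_add, Finset.sum_add_distrib]
  map_smul' r a := by
    simp only [Pi.smul_apply, smul_eq_mul, RingHom.id_apply, Finset.mul_sum]
    exact Finset.sum_congr rfl fun s _ => by ring

lemma span_chain (c : Finset (Fin N) → EE N) :
    ∀ (n : ℕ) (M : Finset (Finset (Fin N))) (bot : Finset (Fin N)),
    (∀ A ∈ M, ∀ B ∈ M, A ∪ B ∈ M) →
    (∀ A ∈ M, ∀ B ∈ M, A ∩ B ∈ M) →
    (∀ A ∈ M, ∀ B ∈ M, c (A ∪ B) + c (A ∩ B) = c A + c B) →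
    bot ∈ M → (∀ A ∈ M, bot ⊆ A) →
    ((Finset.univ : Finset (Fin N)) \ bot).card ≤ n →
    ∃ T : Finset (EE N), T.card ≤ n ∧
      ∀ A ∈ M, c A - c bot ∈ Submodule.span ℝ (T : Set (EE N)) := by
  classical
  intro n
  induction n with
  | zero =>
    intro M bot hcup hcap hmod hbot hle hcard
    refine ⟨∅, le_refl _, ?_⟩
    intro A hA
    have hbotuniv : bot = Finset.univ := by
      have : (Finset.univ \ bot) = ∅ := Finset.card_eq_zero.mp (Nat.le_zero.mp hcard)
      have h2 := Finset.sdiff_eq_empty_iff_subset.mp this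
      exact Finset.Subset.antisymm (Finset.subset_univ _) h2
    have : A = bot := by
      apply Finset.Subset.antisymm _ (hle A hA)
      rw [hbotuniv]; exact Finset.subset_univ _
    simp [this]
  | succ n ih =>
    intro M bot hcup hcap hmod hbot hle hcard
    by_cases hne : (M.erase bot).Nonempty
    · obtain ⟨A', hA'mem, hA'min⟩ := (M.erase bot).exists_minimal hne
      have hA'M : A' ∈ M := Finset.mem_of_mem_erase hA'mem
      have hA'ne : A' ≠ bot := Finset.ne_of_mem_erase hA'mem
      have hbotA' : bot ⊆ A' := hle A' hA'M
      have hssub : bot ⊂ A' := Finset.ssubset_iff_subset_ne.mpr ⟨hbotA', (Ne.symm hA'ne)⟩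
      set M' : Finset (Finset (Fin N)) := M.image (· ∪ A') with hM'def
      have hM'sub : ∀ B ∈ M', B ∈ M := by
        intro B hB
        obtain ⟨A, hA, rfl⟩ := Finset.mem_image.mp hB
        exact hcup A hA A' hA'M
      have hA'M' : A' ∈ M' := by
        refine Finset.mem_image.mpr ⟨bot, hbot, ?_⟩
        simpa using Finset.union_eq_right.mpr hbotA'
      have hleM' : ∀ B ∈ M', A' ⊆ B := by
        intro B hB
        obtain ⟨A, hA, rfl⟩ := Finset.mem_image.mp hB
        exact Finset.subset_union_right
      have hcupM' : ∀ A ∈ M', ∀ B ∈ M', A ∪ B ∈ M' := by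
        intro A hA B hB
        obtain ⟨A₁, hA₁, rfl⟩ := Finset.mem_image.mp hA
        obtain ⟨B₁, hB₁, rfl⟩ := Finset.mem_image.mp hB
        refine Finset.mem_image.mpr ⟨A₁ ∪ B₁, hcup _ hA₁ _ hB₁, ?_⟩
        ext x; simp; tauto
      have hcapM' : ∀ A ∈ M', ∀ B ∈ M', A ∩ B ∈ M' := by
        intro A hA B hB
        obtain ⟨A₁, hA₁, rfl⟩ := Finset.mem_image.mp hA
        obtain ⟨B₁, hB₁, rfl⟩ := Finset.mem_image.mp hB
        refine Finset.mem_image.mpr ⟨A₁ ∩ B₁, hcap _ hA₁ _ hB₁, ?_⟩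
        ext x; simp; tauto
      have hcardM' : ((Finset.univ : Finset (Fin N)) \ A').card ≤ n := by
        have h1 : ((Finset.univ : Finset (Fin N)) \ A').card = Fintype.card (Fin N) - A'.card := by
          rw [Finset.card_sdiff_of_subset (Finset.subset_univ _), Finset.card_univ]
        have h2 : ((Finset.univ : Finset (Fin N)) \ bot).card = Fintype.card (Fin N) - bot.card := by
          rw [Finset.card_sdiff_of_subset (Finset.subset_univ _), Finset.card_univ]
        have h3 : bot.card < A'.card := Finset.card_lt_card hssub
        have h4 : A'.card ≤ Fintype.card (Fin N) := by
          simpa using Finset.card_le_card (Finset.subset_univ A')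
        omega
      obtain ⟨T', hT'card, hT'⟩ := ih M' A'
        (fun A hA B hB => hcupM' A hA B hB)
        (fun A hA B hB => hcapM' A hA B hB)
        (fun A hA B hB => hmod A (hM'sub A hA) B (hM'sub B hB))
        hA'M' hleM' hcardM'
      refine ⟨insert (c A' - c bot) T', ?_, ?_⟩
      · calc (insert (c A' - c bot) T').card ≤ T'.card + 1 := Finset.card_insert_le _ _
          _ ≤ n + 1 := by omega
      · intro A hA
        have hsubspan : Submodule.span ℝ (T' : Set (EE N)) ≤
            Submodule.span ℝ ((insert (c A' - c bot) T' : Finset (EE N)) : Set (EE N)) := by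
          apply Submodule.span_mono
          intro x hx; simp only [Finset.coe_insert, Set.mem_insert_iff]
          exact Or.inr hx
        have hvmem : (c A' - c bot) ∈
            Submodule.span ℝ ((insert (c A' - c bot) T' : Finset (EE N)) : Set (EE N)) := by
          apply Submodule.subset_span; simp
        by_cases hAA' : A' ⊆ A
        · have hAM' : A ∈ M' := Finset.mem_image.mpr ⟨A, hA, Finset.union_eq_left.mpr hAA'⟩
          have h1 := hT' A hAM'
          have : c A - c bot = (c A - c A') + (c A' - c bot) := by abel
          rw [this]
          exact Submodule.add_mem _ (hsubspan h1) hvmem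
        · have hcapmem : A ∩ A' ∈ M := hcap A hA A' hA'M
          have hcapbot : A ∩ A' = bot := by
            by_contra hne2
            have hmin := hA'min (Finset.mem_erase.mpr ⟨hne2, hcapmem⟩) Finset.inter_subset_right
            exact hAA' (hmin.trans Finset.inter_subset_left)
          have hunionM' : A ∪ A' ∈ M' := Finset.mem_image.mpr ⟨A, hA, rfl⟩
          have h1 := hT' (A ∪ A') hunionM'
          have hm := hmod A hA A' hA'M
          rw [hcapbot] at hm
          have hAeq : c A = (c (A ∪ A') + c bot) - c A' := eq_sub_of_add_eq hm.symm
          have : c A - c bot = c (A ∪ A') - c A' := by rw [hAeq]; abel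
          rw [this]
          exact hsubspan h1
    · refine ⟨∅, Nat.zero_le _, ?_⟩
      intro A hA
      have : A = bot := by
        by_contra h
        exact hne ⟨A, Finset.mem_erase.mpr ⟨h, hA⟩⟩
      simp [this]

end SimpleSchedAux

open SimpleSchedAux

/-- For the bilinear max-min problem `max_λ min_A ∑_s λ_s f_s(A)` over the probability
simplex on the `2^N` relay states, with `f_s` nonnegative and submodular, the optimal
value is unchanged when restricting to `λ` with at most `N+1` nonzero entries
(simple schedules). -/
theorem simple_schedules_optimal {N : ℕ}
    (f : (Fin N → Bool) → Finset (Fin N) → ℝ)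
    (hf0 : ∀ s A, 0 ≤ f s A) (hsub : ∀ s, Submodular (f s)) :
    sSup {v : ℝ | ∃ lam : (Fin N → Bool) → ℝ,
        (∀ s, 0 ≤ lam s) ∧ (∑ s, lam s = 1) ∧
        v = ⨅ A : Finset (Fin N), ∑ s, lam s * f s A}
    = sSup {v : ℝ | ∃ lam : (Fin N → Bool) → ℝ,
        (∀ s, 0 ≤ lam s) ∧ (∑ s, lam s = 1) ∧ {s | lam s ≠ 0}.ncard ≤ N + 1 ∧
        v = ⨅ A : Finset (Fin N), ∑ s, lam s * f s A} := by
  classical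
  set Sall : Set ℝ := {v : ℝ | ∃ lam : (Fin N → Bool) → ℝ,
      (∀ s, 0 ≤ lam s) ∧ (∑ s, lam s = 1) ∧
      v = ⨅ A : Finset (Fin N), ∑ s, lam s * f s A} with hSall
  set Ssimp : Set ℝ := {v : ℝ | ∃ lam : (Fin N → Bool) → ℝ,
      (∀ s, 0 ≤ lam s) ∧ (∑ s, lam s = 1) ∧ {s | lam s ≠ 0}.ncard ≤ N + 1 ∧
      v = ⨅ A : Finset (Fin N), ∑ s, lam s * f s A} with hSsimp
  -- the simplex
  set Lam : Set (EE N) := {lam | (∀ s, 0 ≤ lam s) ∧ ∑ s, lam s = 1} with hLam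
  have hval_eq : ∀ lam : EE N, (⨅ A : Finset (Fin N), ∑ s, lam s * f s A) = vfun f lam :=
    fun lam => rfl
  -- point mass
  have hpm : ∃ lam : EE N, lam ∈ Lam ∧ {s | lam s ≠ 0}.ncard ≤ N + 1 ∧ 0 ≤ vfun f lam := by
    set s₀ : Fin N → Bool := fun _ => false
    refine ⟨fun s => if s = s₀ then 1 else 0, ⟨?_, ?_⟩, ?_, ?_⟩
    · intro s; by_cases h : s = s₀ <;> simp [h]
    · simp
    · have : {s | (if s = s₀ then (1:ℝ) else 0) ≠ 0} = {s₀} := by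
        ext t; by_cases h : t = s₀ <;> simp [h]
      rw [this, Set.ncard_singleton]; omega
    · apply le_vfun
      intro A
      apply Finset.sum_nonneg
      intro s _
      exact mul_nonneg (by by_cases h : s = s₀ <;> simp [h]) (hf0 s A)
  have hLamne : Lam.Nonempty := by
    obtain ⟨lam, hl, -, -⟩ := hpm; exact ⟨lam, hl⟩
  -- boundedness
  have hub : ∀ v ∈ Sall, v ≤ ∑ s, f s ∅ := by
    rintro v ⟨lam, hl0, hl1, rfl⟩
    rw [hval_eq]
    refine le_trans (vfun_le ∅) ?_
    apply Finset.sum_le_sum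
    intro s _
    have hls : lam s ≤ 1 := by
      calc lam s ≤ ∑ t, lam t := Finset.single_le_sum (fun t _ => hl0 t) (Finset.mem_univ s)
        _ = 1 := hl1
    calc lam s * f s ∅ ≤ 1 * f s ∅ := mul_le_mul_of_nonneg_right hls (hf0 s ∅)
      _ = f s ∅ := one_mul _
  have hbddL : BddAbove Sall := ⟨_, hub⟩
  have hsubsets : Ssimp ⊆ Sall := by
    intro v hv
    obtain ⟨lam, h0, h1, -, h2⟩ := hv
    exact ⟨lam, h0, h1, h2⟩
  have hbddR : BddAbove Ssimp := hbddL.mono hsubsets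
  have hSsimpne : Ssimp.Nonempty := by
    obtain ⟨lam, ⟨h0, h1⟩, h2, -⟩ := hpm
    exact ⟨vfun f lam, lam, h0, h1, h2, rfl⟩
  have hSallne : Sall.Nonempty := hSsimpne.mono hsubsets
  -- compactness of the simplex
  have hLamcomp : IsCompact Lam := by
    have hclosed : IsClosed Lam := by
      have heq : Lam = (⋂ s, {lam : EE N | 0 ≤ lam s}) ∩ {lam : EE N | ∑ s, lam s = 1} := by
        ext lam
        simp only [hLam, Set.mem_setOf_eq, Set.mem_inter_iff, Set.mem_iInter]
      rw [heq]
      exact (isClosed_iInter fun s => isClosed_le continuous_const (continuous_apply s)).inter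
        (isClosed_eq (continuous_finset_sum _ fun s _ => continuous_apply s) continuous_const)
    have hsub2 : Lam ⊆ Set.pi Set.univ (fun _ : Fin N → Bool => Set.Icc (0:ℝ) 1) := by
      intro lam hl s _
      refine ⟨hl.1 s, ?_⟩
      calc lam s ≤ ∑ t, lam t := Finset.single_le_sum (fun t _ => hl.1 t) (Finset.mem_univ s)
        _ = 1 := hl.2
    exact IsCompact.of_isClosed_subset (isCompact_univ_pi fun _ => isCompact_Icc) hclosed hsub2
  -- maximizer
  obtain ⟨lamstar, hlamstar, hmax⟩ :=
    hLamcomp.exists_isMaxOn hLamne (vfun_continuous (f := f)).continuousOn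
  set vstar : ℝ := vfun f lamstar with hvstar
  have hsupeq : sSup Sall = vstar := by
    apply le_antisymm
    · apply csSup_le hSallne
      intro v hv
      obtain ⟨lam, h0, h1, h2⟩ := hv
      rw [h2, hval_eq]
      exact hmax ⟨h0, h1⟩
    · exact le_csSup hbddL ⟨lamstar, hlamstar.1, hlamstar.2, rfl⟩
  -- key claim
  have hmain : ∃ lam : EE N, lam ∈ Lam ∧ {s | lam s ≠ 0}.ncard ≤ N + 1 ∧ vstar ≤ vfun f lam := by
    by_cases hv0 : vstar ≤ 0
    · obtain ⟨lam, h1, h2, h3⟩ := hpm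
      exact ⟨lam, h1, h2, le_trans hv0 h3⟩
    push_neg at hv0
    -- the optimal face
    set F : Set (EE N) := {lam | (∀ s, 0 ≤ lam s) ∧ (∑ s, lam s = 1) ∧
        ∀ A, vstar ≤ gfun f lam A} with hFdef
    have hFsubLam : F ⊆ Lam := fun lam h => ⟨h.1, h.2.1⟩
    have hFclosed : IsClosed F := by
      have heq : F = ((⋂ s, {lam : EE N | 0 ≤ lam s}) ∩ {lam : EE N | ∑ s, lam s = 1}) ∩
          (⋂ A, {lam : EE N | vstar ≤ gfun f lam A}) := by
        ext lam
        simp only [hFdef, Set.mem_setOf_eq, Set.mem_inter_iff, Set.mem_iInter]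
        tauto
      rw [heq]
      refine IsClosed.inter (IsClosed.inter ?_ ?_) ?_
      · exact isClosed_iInter fun s => isClosed_le continuous_const (continuous_apply s)
      · exact isClosed_eq (continuous_finset_sum _ fun s _ => continuous_apply s) continuous_const
      · exact isClosed_iInter fun A => isClosed_le continuous_const (gfun_continuous A)
    have hFcomp : IsCompact F := IsCompact.of_isClosed_subset hLamcomp hFclosed hFsubLam
    have hFne : F.Nonempty := ⟨lamstar, hlamstar.1, hlamstar.2, fun A => vfun_le A⟩
    obtain ⟨lam0, hlam0ext⟩ := hFcomp.extremePoints_nonempty hFne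
    have hlam0F : lam0 ∈ F := hlam0ext.1
    have hextr := hlam0ext.2
    have h0 : ∀ s, 0 ≤ lam0 s := hlam0F.1
    have h1 : ∑ s, lam0 s = 1 := hlam0F.2.1
    have hcons : ∀ A, vstar ≤ gfun f lam0 A := hlam0F.2.2
    have hlam0Lam : lam0 ∈ Lam := hFsubLam hlam0F
    set S : Finset (Fin N → Bool) := Finset.univ.filter (fun s => lam0 s ≠ 0) with hSdef
    have hSmem : ∀ s, s ∈ S ↔ lam0 s ≠ 0 := fun s => by simp [hSdef]
    suffices hcardS : S.card ≤ N + 1 by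
      refine ⟨lam0, hlam0Lam, ?_, le_vfun hcons⟩
      have heq2 : {s | lam0 s ≠ 0} = (S : Set (Fin N → Bool)) := by
        ext s; simp [hSmem]
      rw [heq2, Set.ncard_coe_finset]
      exact hcardS
    by_contra hSc
    push_neg at hSc
    -- minimizer set
    set M : Finset (Finset (Fin N)) := Finset.univ.filter (fun A => gfun f lam0 A = vstar)
      with hMdef
    have hMmem : ∀ A, A ∈ M ↔ gfun f lam0 A = vstar := fun A => by simp [hMdef]
    have hMne' : ∃ A, A ∈ M := by
      obtain ⟨A, hA⟩ := vfun_attained (f := f) (lam := lam0)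
      have hv0' : vfun f lam0 = vstar := le_antisymm (hmax hlam0Lam) (le_vfun hcons)
      exact ⟨A, (hMmem A).mpr (by rw [← hA, hv0'])⟩
    have hgsub : ∀ A B, gfun f lam0 (A ∪ B) + gfun f lam0 (A ∩ B) ≤
        gfun f lam0 A + gfun f lam0 B := by
      intro A B
      have e1 : gfun f lam0 (A ∪ B) + gfun f lam0 (A ∩ B)
          = ∑ s, lam0 s * (f s (A ∪ B) + f s (A ∩ B)) := by
        rw [gfun, gfun, ← Finset.sum_add_distrib]
        exact Finset.sum_congr rfl fun s _ => by ring
      have e2 : gfun f lam0 A + gfun f lam0 B = ∑ s, lam0 s * (f s A + f s B) := by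
        rw [gfun, gfun, ← Finset.sum_add_distrib]
        exact Finset.sum_congr rfl fun s _ => by ring
      rw [e1, e2]
      exact Finset.sum_le_sum fun s _ => mul_le_mul_of_nonneg_left (hsub s A B) (h0 s)
    have hMboth : ∀ A ∈ M, ∀ B ∈ M,
        gfun f lam0 (A ∪ B) = vstar ∧ gfun f lam0 (A ∩ B) = vstar := by
      intro A hA B hB
      have h3 := hgsub A B
      rw [(hMmem A).mp hA, (hMmem B).mp hB] at h3
      have h4 := hcons (A ∪ B)
      have h5 := hcons (A ∩ B)
      constructor <;> linarith
    have hMcup : ∀ A ∈ M, ∀ B ∈ M, A ∪ B ∈ M :=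
      fun A hA B hB => (hMmem _).mpr (hMboth A hA B hB).1
    have hMcap : ∀ A ∈ M, ∀ B ∈ M, A ∩ B ∈ M :=
      fun A hA B hB => (hMmem _).mpr (hMboth A hA B hB).2
    have hptmod : ∀ A ∈ M, ∀ B ∈ M, ∀ s, lam0 s ≠ 0 →
        f s (A ∪ B) + f s (A ∩ B) = f s A + f s B := by
      intro A hA B hB
      have hzero : ∑ s, lam0 s * ((f s A + f s B) - (f s (A ∪ B) + f s (A ∩ B))) = 0 := by
        have e3 : ∑ s, lam0 s * ((f s A + f s B) - (f s (A ∪ B) + f s (A ∩ B)))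
            = (gfun f lam0 A + gfun f lam0 B)
              - (gfun f lam0 (A ∪ B) + gfun f lam0 (A ∩ B)) := by
          rw [gfun, gfun, gfun, gfun, ← Finset.sum_add_distrib, ← Finset.sum_add_distrib,
            ← Finset.sum_sub_distrib]
          exact Finset.sum_congr rfl fun s _ => by ring
        rw [e3, (hMmem A).mp hA, (hMmem B).mp hB, (hMboth A hA B hB).1, (hMboth A hA B hB).2]
        ring
      have hnn : ∀ s ∈ Finset.univ,
          0 ≤ lam0 s * ((f s A + f s B) - (f s (A ∪ B) + f s (A ∩ B))) :=
        fun s _ => mul_nonneg (h0 s) (by have := hsub s A B; linarith)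
      have hz2 := (Finset.sum_eq_zero_iff_of_nonneg hnn).mp hzero
      intro s hs
      have h6 := hz2 s (Finset.mem_univ s)
      rcases mul_eq_zero.mp h6 with h7 | h7
      · exact absurd h7 hs
      · linarith
    set c : Finset (Fin N) → EE N := fun A => (fun s => if lam0 s = 0 then 0 else f s A)
      with hcdef
    have hmodc : ∀ A ∈ M, ∀ B ∈ M, c (A ∪ B) + c (A ∩ B) = c A + c B := by
      intro A hA B hB
      funext s
      by_cases hs : lam0 s = 0
      · simp [hcdef, hs]
      · simp only [hcdef, Pi.add_apply, if_neg hs]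
        linarith [hptmod A hA B hB s hs]
    obtain ⟨Abot, hAbotM, hAbotmin⟩ := M.exists_minimal ⟨hMne'.choose, hMne'.choose_spec⟩
    have hbotle : ∀ A ∈ M, Abot ⊆ A := by
      intro A hA
      have hint : Abot ∩ A ∈ M := hMcap Abot hAbotM A hA
      have hle : Abot ∩ A ≤ Abot := Finset.inter_subset_left
      rcases hle.lt_or_eq with hlt | heq
      · exact absurd hlt (not_lt_of_ge (hAbotmin hint hle : Abot ≤ Abot ∩ A))
      · exact Finset.inter_eq_left.mp heq
    obtain ⟨T, hTcard, hTspan⟩ := span_chain c N M Abot hMcup hMcap hmodc hAbotM hbotle (by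
      calc (Finset.univ \ Abot).card ≤ (Finset.univ : Finset (Fin N)).card :=
            Finset.card_le_card Finset.sdiff_subset
        _ = N := by rw [Finset.card_univ, Fintype.card_fin])
    set T₁ : Finset (EE N) := insert (c Abot) T with hT₁def
    have hT₁card : T₁.card ≤ N + 1 := le_trans (Finset.card_insert_le _ _) (by omega)
    have hspan1 : ∀ A ∈ M, c A ∈ Submodule.span ℝ (T₁ : Set (EE N)) := by
      intro A hA
      have h7 : Submodule.span ℝ (T : Set (EE N)) ≤ Submodule.span ℝ (T₁ : Set (EE N)) := by
        apply Submodule.span_mono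
        intro x hx
        simp only [hT₁def, Finset.coe_insert, Set.mem_insert_iff]
        exact Or.inr hx
      have h8 : c Abot ∈ Submodule.span ℝ (T₁ : Set (EE N)) :=
        Submodule.subset_span (by simp [hT₁def])
      have h9 := h7 (hTspan A hA)
      have heq3 : c A = (c A - c Abot) + c Abot := by abel
      rw [heq3]
      exact Submodule.add_mem _ h9 h8
    -- perturbation direction
    set φ : EE N →ₗ[ℝ] ((↥T₁ ⊕ ↥(Sᶜ)) → ℝ) := LinearMap.pi (fun j =>
      Sum.elim (fun t : ↥T₁ => pairL (t : EE N))
        (fun s : ↥(Sᶜ) => LinearMap.proj ((s : Fin N → Bool))) j) with hφdef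
    have hrank : 1 ≤ Module.finrank ℝ (LinearMap.ker φ) := by
      have e1 : Module.finrank ℝ (EE N) = Fintype.card (Fin N → Bool) :=
        Module.finrank_fintype_fun_eq_card ℝ
      have e2 : Module.finrank ℝ ((↥T₁ ⊕ ↥(Sᶜ)) → ℝ)
          = T₁.card + (Fintype.card (Fin N → Bool) - S.card) := by
        rw [Module.finrank_fintype_fun_eq_card ℝ, Fintype.card_sum, Fintype.card_coe,
          Fintype.card_coe, Finset.card_compl]
      have e3 := LinearMap.finrank_range_add_finrank_ker φ
      have e4 : Module.finrank ℝ (LinearMap.range φ)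
          ≤ Module.finrank ℝ ((↥T₁ ⊕ ↥(Sᶜ)) → ℝ) := Submodule.finrank_le _
      have e5 : S.card ≤ Fintype.card (Fin N → Bool) := by
        simpa using Finset.card_le_card (Finset.subset_univ S)
      rw [e1] at e3
      rw [e2] at e4
      omega
    have hkerne : ∃ d : EE N, d ∈ LinearMap.ker φ ∧ d ≠ 0 := by
      rw [← Submodule.ne_bot_iff]
      intro hbot
      rw [hbot] at hrank
      simp [finrank_bot] at hrank
    obtain ⟨d, hdker, hdne⟩ := hkerne
    have hφd : φ d = 0 := LinearMap.mem_ker.mp hdker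
    have hd2 : ∀ s, lam0 s = 0 → d s = 0 := by
      intro s hs
      have hsS : s ∈ Sᶜ := Finset.mem_compl.mpr (by rw [hSmem]; simp [hs])
      have := congrFun hφd (Sum.inr ⟨s, hsS⟩)
      simpa [hφdef, LinearMap.pi_apply] using this
    have hd1 : ∀ t ∈ T₁, (∑ s, t s * d s) = 0 := by
      intro t ht
      have := congrFun hφd (Sum.inl ⟨t, ht⟩)
      simpa [hφdef, LinearMap.pi_apply, pairL] using this
    have hdA : ∀ A ∈ M, ∑ s, f s A * d s = 0 := by
      intro A hA
      have hkerpair : Submodule.span ℝ (T₁ : Set (EE N)) ≤ LinearMap.ker (pairL d) := by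
        rw [Submodule.span_le]
        intro t ht
        rw [SetLike.mem_coe, LinearMap.mem_ker]
        have heq4 : (pairL d) t = ∑ s, t s * d s := by
          show (∑ s, d s * t s) = _
          exact Finset.sum_congr rfl fun s _ => by ring
        rw [heq4]
        exact hd1 t ht
      have h10 : (pairL d) (c A) = 0 := hkerpair (hspan1 A hA)
      have h11 : (pairL d) (c A) = ∑ s, d s * c A s := rfl
      calc ∑ s, f s A * d s = ∑ s, d s * c A s := by
            apply Finset.sum_congr rfl
            intro s _
            by_cases hs : lam0 s = 0
            · simp [hcdef, hs, hd2 s hs]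
            · simp only [hcdef, if_neg hs]; ring
        _ = 0 := by rw [← h11, h10]
    -- eventual positivity facts
    have hevPos : ∀ e : EE N, (∀ s, lam0 s = 0 → e s = 0) →
        ∀ᶠ ε in 𝓝[>] (0:ℝ), ∀ s, 0 ≤ lam0 s + ε * e s := by
      intro e he
      rw [Filter.eventually_all]
      intro s
      by_cases hs : lam0 s = 0
      · filter_upwards with ε
        simp [hs, he s hs]
      · have hpos : 0 < lam0 s := lt_of_le_of_ne (h0 s) (Ne.symm hs)
        have hcont : Continuous (fun ε : ℝ => lam0 s + ε * e s) :=
          continuous_const.add (continuous_id.mul continuous_const)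
        have htend : Tendsto (fun ε : ℝ => lam0 s + ε * e s) (𝓝[>] 0) (𝓝 (lam0 s)) := by
          have h12 := hcont.tendsto 0
          simp only [zero_mul, add_zero] at h12
          exact h12.mono_left nhdsWithin_le_nhds
        exact (htend.eventually_const_lt hpos).mono fun ε h => le_of_lt h
    have hevCon : ∀ e : EE N, ∀ᶠ ε in 𝓝[>] (0:ℝ),
        ∀ A, A ∉ M → vstar < gfun f lam0 A + ε * ∑ s, f s A * e s := by
      intro e
      rw [Filter.eventually_all]
      intro A
      by_cases hA : A ∈ M
      · filter_upwards with ε hc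
        exact absurd hA hc
      · have hgt : vstar < gfun f lam0 A :=
          lt_of_le_of_ne (hcons A) fun h => hA ((hMmem A).mpr h.symm)
        have hcont : Continuous (fun ε : ℝ => gfun f lam0 A + ε * ∑ s, f s A * e s) :=
          continuous_const.add (continuous_id.mul continuous_const)
        have htend : Tendsto (fun ε : ℝ => gfun f lam0 A + ε * ∑ s, f s A * e s)
            (𝓝[>] 0) (𝓝 (gfun f lam0 A)) := by
          have h12 := hcont.tendsto 0
          simp only [zero_mul, add_zero] at h12
          exact h12.mono_left nhdsWithin_le_nhds
        exact (htend.eventually_const_lt hgt).mono fun ε h hc => h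
    -- no direction with negative total mass
    have hkey : ∀ e : EE N, (∀ s, lam0 s = 0 → e s = 0) →
        (∀ A ∈ M, ∑ s, f s A * e s = 0) → ¬ (∑ s, e s < 0) := by
      intro e he heA hneg
      set σ : ℝ := ∑ s, e s with hσdef
      have hev2 : ∀ᶠ ε in 𝓝[>] (0:ℝ), 0 < 1 + ε * σ := by
        have hcont : Continuous fun ε : ℝ => 1 + ε * σ :=
          continuous_const.add (continuous_id.mul continuous_const)
        have htend : Tendsto (fun ε : ℝ => 1 + ε * σ) (𝓝[>] 0) (𝓝 (1:ℝ)) := by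
          have h12 := hcont.tendsto 0
          simp only [zero_mul, add_zero] at h12
          exact h12.mono_left nhdsWithin_le_nhds
        exact htend.eventually_const_lt one_pos
      have hev3 : ∀ᶠ ε in 𝓝[>] (0:ℝ), 1 + ε * σ < 1 := by
        filter_upwards [self_mem_nhdsWithin] with ε hε
        have hm : ε * σ < 0 := mul_neg_of_pos_of_neg (Set.mem_Ioi.mp hε) hneg
        linarith
      obtain ⟨ε, ⟨⟨⟨hP, hb2⟩, hb3⟩, hb4⟩, hb5⟩ :=
        ((((hevPos e he).and hev2).and hev3).and (hevCon e)).and self_mem_nhdsWithin |>.exists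
      have hεpos : (0:ℝ) < ε := Set.mem_Ioi.mp hb5
      set cf : ℝ := 1 + ε * σ with hcfdef
      have hcf0 : 0 < cf := hb2
      have hcfne : cf ≠ 0 := ne_of_gt hcf0
      set μ : EE N := fun s => cf⁻¹ * (lam0 s + ε * e s) with hμdef
      have hμ0 : ∀ s, 0 ≤ μ s := fun s =>
        mul_nonneg (inv_nonneg.mpr (le_of_lt hcf0)) (hP s)
      have hμ1 : ∑ s, μ s = 1 := by
        have hsum2 : ∑ s, (lam0 s + ε * e s) = cf := by
          rw [Finset.sum_add_distrib, h1, ← Finset.mul_sum, hcfdef, ← hσdef]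
        calc ∑ s, μ s = cf⁻¹ * ∑ s, (lam0 s + ε * e s) := by
              rw [← Finset.mul_sum]
          _ = cf⁻¹ * cf := by rw [hsum2]
          _ = 1 := inv_mul_cancel₀ hcfne
      have hgexp : ∀ (A : Finset (Fin N)),
          gfun f μ A = cf⁻¹ * (gfun f lam0 A + ε * ∑ s, f s A * e s) := by
        intro A
        have e6 : ∀ s, μ s * f s A = cf⁻¹ * (lam0 s * f s A + ε * (f s A * e s)) :=
          fun s => by rw [hμdef]; ring
        calc gfun f μ A = ∑ s, cf⁻¹ * (lam0 s * f s A + ε * (f s A * e s)) :=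
              Finset.sum_congr rfl fun s _ => e6 s
          _ = cf⁻¹ * ∑ s, (lam0 s * f s A + ε * (f s A * e s)) := by rw [← Finset.mul_sum]
          _ = cf⁻¹ * (gfun f lam0 A + ε * ∑ s, f s A * e s) := by
              rw [Finset.sum_add_distrib, ← Finset.mul_sum, gfun]
      have hall : ∀ A, vstar < gfun f μ A := by
        intro A
        rw [hgexp A, inv_mul_eq_div, lt_div_iff₀ hcf0]
        by_cases hA : A ∈ M
        · rw [heA A hA, (hMmem A).mp hA, mul_zero, add_zero]
          exact mul_lt_of_lt_one_right hv0 hb3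
        · have h13 := hb4 A hA
          have h14 : vstar * cf < vstar := mul_lt_of_lt_one_right hv0 hb3
          linarith
      obtain ⟨A₁, hA₁⟩ := vfun_attained (f := f) (lam := μ)
      have h15 : vfun f μ ≤ vstar := hmax ⟨hμ0, hμ1⟩
      have h16 := hall A₁
      rw [← hA₁] at h16
      linarith
    have hdsum : ∑ s, d s = 0 := by
      rcases lt_trichotomy (∑ s, d s) 0 with h | h | h
      · exact absurd h (hkey d hd2 hdA)
      · exact h
      · refine absurd ?_ (hkey (-d) (fun s hs => by simp [hd2 s hs]) (fun A hA => by
          have he7 : ∑ s, f s A * (-d) s = -∑ s, f s A * d s := by simp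
          rw [he7, hdA A hA, neg_zero]))
        simpa using h
    -- final contradiction with extremality
    obtain ⟨ε, ⟨⟨⟨hP1, hP2⟩, hC1⟩, hC2⟩, hb5⟩ :=
      ((((hevPos d hd2).and (hevPos (-d) (fun s hs => by simp [hd2 s hs]))).and
        (hevCon d)).and (hevCon (-d))).and self_mem_nhdsWithin |>.exists
    have hεpos : (0:ℝ) < ε := Set.mem_Ioi.mp hb5
    have hgexp2 : ∀ (e : EE N) (A : Finset (Fin N)),
        gfun f (fun s => lam0 s + ε * e s) A = gfun f lam0 A + ε * ∑ s, f s A * e s := by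
      intro e A
      calc gfun f (fun s => lam0 s + ε * e s) A
          = ∑ s, (lam0 s * f s A + ε * (f s A * e s)) :=
            Finset.sum_congr rfl fun s _ => by ring
        _ = gfun f lam0 A + ε * ∑ s, f s A * e s := by
            rw [Finset.sum_add_distrib, ← Finset.mul_sum, gfun]
    have hmemF : ∀ e : EE N, (∀ s, 0 ≤ lam0 s + ε * e s) → (∑ s, e s = 0) →
        (∀ A ∈ M, ∑ s, f s A * e s = 0) →
        (∀ A, A ∉ M → vstar < gfun f lam0 A + ε * ∑ s, f s A * e s) →
        (fun s => lam0 s + ε * e s) ∈ F := by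
      intro e hp hsum hA hcon
      refine ⟨hp, ?_, ?_⟩
      · rw [Finset.sum_add_distrib, h1, ← Finset.mul_sum, hsum, mul_zero, add_zero]
      · intro A
        rw [hgexp2 e A]
        by_cases hAM : A ∈ M
        · rw [hA A hAM, mul_zero, add_zero]
          exact hcons A
        · exact le_of_lt (hcon A hAM)
    set y : EE N := fun s => lam0 s + ε * d s with hydef
    set z : EE N := fun s => lam0 s + ε * (-d) s with hzdef
    have hyF : y ∈ F := hmemF d hP1 hdsum hdA hC1
    have hzF : z ∈ F := hmemF (-d) hP2 (by simp [hdsum]) (fun A hA => by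
      have he7 : ∑ s, f s A * (-d) s = -∑ s, f s A * d s := by simp
      rw [he7, hdA A hA, neg_zero]) hC2
    have hseg : lam0 ∈ openSegment ℝ y z := by
      refine ⟨1/2, 1/2, by norm_num, by norm_num, by norm_num, ?_⟩
      funext s
      simp only [hydef, hzdef, Pi.add_apply, Pi.smul_apply, smul_eq_mul, Pi.neg_apply]
      ring
    have hy := hextr hyF hzF hseg
    obtain ⟨s₀, hs₀⟩ := Function.ne_iff.mp hdne
    have hys := congrFun hy s₀
    have heq5 : lam0 s₀ + ε * d s₀ = lam0 s₀ := hys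
    have : ε * d s₀ = 0 := by linarith
    rcases mul_eq_zero.mp this with h | h
    · exact absurd h (ne_of_gt hεpos)
    · exact hs₀ h
  obtain ⟨lam', ⟨h0', h1'⟩, hcard', hval'⟩ := hmain
  apply le_antisymm
  · calc sSup Sall = vstar := hsupeq
      _ ≤ vfun f lam' := hval'
      _ ≤ sSup Ssimp := le_csSup hbddR ⟨lam', h0', h1', hcard', rfl⟩
  · exact csSup_le_csSup hbddL hSsimpne hsubsets
end

section
/- Let γ > 0, A = log(1+2γ), B = log(1+4γ), C = log(1+γ). Then max over probability vectors (λ_{00}, λ_{01}, λ_{10}, λ_{11}) of min{ (λ_{01}+λ_{10})·C + λ_{11}·B , λ_{00}·A + (λ_{01}+λ_{10})·C } equals max{ C , AB/(A+B) }. -/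
/-- Example 2 of the line network: with `A = log(1+2γ)`, `B = log(1+4γ)`,
`C = log(1+γ)`, the max over probability vectors of
`min {(λ₀₁+λ₁₀)C + λ₁₁B, λ₀₀A + (λ₀₁+λ₁₀)C}` equals `max {C, AB/(A+B)}`. -/
theorem line_network_example2 (γ : ℝ) (hγ : 0 < γ) (A B C : ℝ)
    (hA : A = Real.log (1 + 2 * γ)) (hB : B = Real.log (1 + 4 * γ))
    (hC : C = Real.log (1 + γ)) :
    IsGreatest {v : ℝ | ∃ l00 l01 l10 l11 : ℝ,
        0 ≤ l00 ∧ 0 ≤ l01 ∧ 0 ≤ l10 ∧ 0 ≤ l11 ∧ l00 + l01 + l10 + l11 = 1 ∧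
        v = min ((l01 + l10) * C + l11 * B) (l00 * A + (l01 + l10) * C)}
      (max C (A * B / (A + B))) := by
  have hApos : 0 < A := by
    rw [hA]; apply Real.log_pos; linarith
  have hBpos : 0 < B := by
    rw [hB]; apply Real.log_pos; linarith
  have hCpos : 0 < C := by
    rw [hC]; apply Real.log_pos; linarith
  have hABpos : 0 < A + B := by linarith
  constructor
  · by_cases h : A * B / (A + B) ≤ C
    · refine ⟨0, 1, 0, 0, le_refl _, zero_le_one, le_refl _, le_refl _, by ring, ?_⟩
      rw [max_eq_left h]
      simp
    · push_neg at h
      refine ⟨B / (A + B), 0, 0, A / (A + B), by positivity, le_refl _, le_refl _,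
        by positivity, by field_simp; ring, ?_⟩
      rw [max_eq_right h.le]
      have h1 : (0 + 0) * C + A / (A + B) * B = A * B / (A + B) := by
        field_simp; ring
      have h2 : B / (A + B) * A + (0 + 0) * C = A * B / (A + B) := by
        field_simp; ring
      rw [h1, h2, min_self]
  · rintro v ⟨l00, l01, l10, l11, h0, h1, h2, h3, hsum, hv⟩
    set M := max C (A * B / (A + B)) with hM
    have hCM : C ≤ M := le_max_left _ _
    have hABM : A * B ≤ M * (A + B) := by
      have := le_max_right C (A * B / (A + B))
      rw [div_le_iff₀ hABpos] at this
      linarith [this]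
    have hv1 : v ≤ (l01 + l10) * C + l11 * B := hv ▸ min_le_left _ _
    have hv2 : v ≤ l00 * A + (l01 + l10) * C := hv ▸ min_le_right _ _
    have hl00 : l00 = 1 - l01 - l10 - l11 := by linarith
    subst hl00
    have key : (A + B) * v ≤ (A + B) * M := by
      nlinarith [mul_le_mul_of_nonneg_left hv1 hApos.le,
        mul_le_mul_of_nonneg_left hv2 hBpos.le,
        mul_le_mul_of_nonneg_left hCM (by positivity : (0:ℝ) ≤ (l01 + l10) * (A + B)),
        mul_le_mul_of_nonneg_left hABM (by linarith : (0:ℝ) ≤ (1 - l01 - l10 - l11) + l11)]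
    exact le_of_mul_le_mul_left key hABpos
end
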